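/- Let s>0, λ>0 and N≥1. Let μ_N be the product probability measure on (0,∞)^N whose i-th marginal is the Gamma distribution with density (λ^{2s}/Γ(2s)) y^{2s-1} e^{-λ y}, and let 𝓛 be the generator of the integrable heat conduction model with equal boundary parameters λ_L = λ_R = λ. Then μ_N is stationary at the generator level: for every polynomial function f: ℝ^N → ℝ, ∫_{(0,∞)^N} (𝓛f)(y) μ_N(dy) = 0. -/

import Mathlib

open MeasureTheory Real

noncomputable section

namespace HeatModel

variable {N : ℕ}

/-- Value of the energy configuration at (0-indexed) site `i`; junk value 0 if out of range. -/
def get (y : Fin N → ℝ) (i : ℕ) : ℝ := if h : i < N then y ⟨i, h⟩ else 0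

/-- Update the energy configuration at site `i` to value `v`. -/
def upd (y : Fin N → ℝ) (i : ℕ) (v : ℝ) : Fin N → ℝ := fun j => if (j : ℕ) = i then v else y j

/-- Move an amount `a` of energy from site `i` to site `j`. -/
def move (y : Fin N → ℝ) (i j : ℕ) (a : ℝ) : Fin N → ℝ :=
  upd (upd y i (get y i - a)) j (get y j + a)

/-- Bulk Levy generator on the bond `(i, i+1)` (0-indexed sites). -/
def bulkGen (s : ℝ) (i : ℕ) (f : (Fin N → ℝ) → ℝ) (y : Fin N → ℝ) : ℝ :=
  (∫ a in Set.Ioo 0 (get y i),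
      (1 - a / get y i) ^ (2 * s - 1) / a * (f (move y i (i + 1) a) - f y))
  + ∫ a in Set.Ioo 0 (get y (i + 1)),
      (1 - a / get y (i + 1)) ^ (2 * s - 1) / a * (f (move y (i + 1) i a) - f y)

/-- Left reservoir generator (acting at site `0`), with parameter `lamL`. -/
def leftGen (s lamL : ℝ) (f : (Fin N → ℝ) → ℝ) (y : Fin N → ℝ) : ℝ :=
  (∫ a in Set.Ioo 0 (get y 0),
      (1 - a / get y 0) ^ (2 * s - 1) / a * (f (upd y 0 (get y 0 - a)) - f y))
  + ∫ a in Set.Ioi (0 : ℝ),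
      Real.exp (-(lamL * a)) / a * (f (upd y 0 (get y 0 + a)) - f y)

/-- Right reservoir generator (acting at site `N-1`), with parameter `lamR`. -/
def rightGen (s lamR : ℝ) (f : (Fin N → ℝ) → ℝ) (y : Fin N → ℝ) : ℝ :=
  (∫ a in Set.Ioo 0 (get y (N - 1)),
      (1 - a / get y (N - 1)) ^ (2 * s - 1) / a *
        (f (upd y (N - 1) (get y (N - 1) - a)) - f y))
  + ∫ a in Set.Ioi (0 : ℝ),
      Real.exp (-(lamR * a)) / a * (f (upd y (N - 1) (get y (N - 1) + a)) - f y)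

/-- The full generator of the integrable heat conduction model. -/
def gen (s lamL lamR : ℝ) (f : (Fin N → ℝ) → ℝ) (y : Fin N → ℝ) : ℝ :=
  leftGen s lamL f y + (∑ i ∈ Finset.range (N - 1), bulkGen s i f y) + rightGen s lamR f y

/-- Density of the product of `N` Gamma(2s, lam) distributions. -/
def gammaWeight (s lam : ℝ) (y : Fin N → ℝ) : ℝ :=
  ∏ i : Fin N, lam ^ (2 * s) / Real.Gamma (2 * s) * (y i) ^ (2 * s - 1) * Real.exp (-(lam * y i))



section Aux

def unit (N i : ℕ) : Fin N → ℝ := fun j => if (j : ℕ) = i then 1 else 0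

lemma get_eq {i : ℕ} (h : i < N) (y : Fin N → ℝ) : get y i = y ⟨i, h⟩ := dif_pos h

lemma add_smul_unit_apply {i : ℕ} (y : Fin N → ℝ) (a : ℝ) (k : Fin N) :
    (y + a • unit N i) k = if (k : ℕ) = i then y k + a else y k := by
  simp only [Pi.add_apply, Pi.smul_apply, unit, smul_eq_mul]
  by_cases hk : (k : ℕ) = i <;> simp [hk]

lemma upd_add_eq {i : ℕ} (h : i < N) (y : Fin N → ℝ) (a : ℝ) :
    upd y i (get y i + a) = y + a • unit N i := by
  funext j
  rw [add_smul_unit_apply]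
  by_cases hj : (j : ℕ) = i
  · have hji : j = ⟨i, h⟩ := Fin.ext hj
    subst hji
    simp [upd, get_eq h]
  · simp [upd, hj]

lemma upd_sub_eq {i : ℕ} (h : i < N) (y : Fin N → ℝ) (a : ℝ) :
    upd y i (get y i - a) = y + a • (-(unit N i)) := by
  have := upd_add_eq h y (-a)
  simpa [sub_eq_add_neg] using this

lemma move_eq {i j : ℕ} (hi : i < N) (hj : j < N) (hij : i ≠ j) (y : Fin N → ℝ) (a : ℝ) :
    move y i j a = y + a • (unit N j - unit N i) := by
  funext k
  simp only [move, upd, unit, Pi.add_apply, Pi.smul_apply, Pi.sub_apply, smul_eq_mul]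
  by_cases hkj : (k : ℕ) = j
  · have hk : k = ⟨j, hj⟩ := Fin.ext hkj
    have hji : j ≠ i := fun h => hij h.symm
    subst hk
    simp only [hkj, if_pos rfl, if_neg hji, get_eq hj]
    norm_num
  · by_cases hki : (k : ℕ) = i
    · have hk : k = ⟨i, hi⟩ := Fin.ext hki
      subst hk
      simp only [hki, hkj, if_pos rfl, if_neg hij, if_neg hkj, get_eq hi]
      norm_num
      ring
    · simp [hki, hkj]

/-- The shear `(y, a) ↦ (y + a • v, a)` as a measurable equivalence. -/
def shear (N : ℕ) (v : Fin N → ℝ) : ((Fin N → ℝ) × ℝ) ≃ᵐ ((Fin N → ℝ) × ℝ) where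
  toFun z := (z.1 + z.2 • v, z.2)
  invFun z := (z.1 - z.2 • v, z.2)
  left_inv z := by simp
  right_inv z := by simp
  measurable_toFun :=
    (measurable_fst.add ((continuous_snd.smul continuous_const).measurable)).prodMk
      measurable_snd
  measurable_invFun :=
    (measurable_fst.sub ((continuous_snd.smul continuous_const).measurable)).prodMk
      measurable_snd

lemma shear_measurePreserving (N : ℕ) (v : Fin N → ℝ) :
    MeasurePreserving (shear N v) ((volume : Measure (Fin N → ℝ)).prod volume)
      ((volume : Measure (Fin N → ℝ)).prod volume) := by
  have h1 : MeasurePreserving (fun q : ℝ × (Fin N → ℝ) => (q.1, q.2 + q.1 • v))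
      ((volume : Measure ℝ).prod volume) ((volume : Measure ℝ).prod volume) := by
    refine (MeasurePreserving.id _).skew_product
      (g := fun (a : ℝ) (y : Fin N → ℝ) => y + a • v) ?_
      (Filter.Eventually.of_forall fun a => ?_)
    · exact measurable_snd.add ((continuous_fst.smul continuous_const).measurable)
    · exact map_add_right_eq_self volume (a • v)
  have h2 := (Measure.measurePreserving_swap.comp h1).comp
    (Measure.measurePreserving_swap
      (μ := (volume : Measure (Fin N → ℝ))) (ν := (volume : Measure ℝ)))
  have : ⇑(shear N v) = (Prod.swap ∘ (fun q : ℝ × (Fin N → ℝ) => (q.1, q.2 + q.1 • v))) ∘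
      (Prod.swap : (Fin N → ℝ) × ℝ → ℝ × (Fin N → ℝ)) := rfl
  rw [this]
  exact h2


open MvPolynomial in
lemma abs_eval_le_exp (p : MvPolynomial (Fin N) ℝ) :
    ∀ ε : ℝ, 0 < ε → ∃ C : ℝ, 0 ≤ C ∧
      ∀ y : Fin N → ℝ, |eval y p| ≤ C * Real.exp (ε * ∑ i, |y i|) := by
  induction p using MvPolynomial.induction_on with
  | C a =>
    intro ε hε
    refine ⟨|a|, abs_nonneg a, fun y => ?_⟩
    have h0 : (0:ℝ) ≤ ε * ∑ i, |y i| :=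
      mul_nonneg hε.le (Finset.sum_nonneg fun i _ => abs_nonneg _)
    simpa using le_mul_of_one_le_right (abs_nonneg a) (Real.one_le_exp h0)
  | add p q hp hq =>
    intro ε hε
    obtain ⟨C₁, hC₁0, hC₁⟩ := hp ε hε
    obtain ⟨C₂, hC₂0, hC₂⟩ := hq ε hε
    refine ⟨C₁ + C₂, by linarith, fun y => ?_⟩
    calc |eval y (p + q)| ≤ |eval y p| + |eval y q| := by
          rw [map_add]; exact abs_add_le _ _
      _ ≤ C₁ * Real.exp (ε * ∑ i, |y i|) + C₂ * Real.exp (ε * ∑ i, |y i|) :=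
          add_le_add (hC₁ y) (hC₂ y)
      _ = (C₁ + C₂) * Real.exp (ε * ∑ i, |y i|) := by ring
  | mul_X p n hp =>
    intro ε hε
    obtain ⟨C, hC0, hC⟩ := hp (ε/2) (by positivity)
    refine ⟨C * (2/ε), by positivity, fun y => ?_⟩
    set S := ∑ i, |y i| with hS
    have hS0 : 0 ≤ S := Finset.sum_nonneg fun i _ => abs_nonneg _
    have hyn : |y n| ≤ S := Finset.single_le_sum (f := fun i => |y i|)
      (fun i _ => abs_nonneg _) (Finset.mem_univ n)
    have h2 : |y n| ≤ 2/ε * Real.exp (ε/2 * S) := by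
      have h3 : ε/2 * |y n| ≤ Real.exp (ε/2 * S) := by
        have := Real.add_one_le_exp (ε/2 * S)
        have h4 : ε/2 * |y n| ≤ ε/2 * S := by gcongr
        linarith
      calc |y n| = 2/ε * (ε/2 * |y n|) := by field_simp
        _ ≤ 2/ε * Real.exp (ε/2 * S) := by gcongr
    have hexp : Real.exp (ε/2 * S) * Real.exp (ε/2 * S) = Real.exp (ε * S) := by
      rw [← Real.exp_add]; congr 1; ring
    calc |eval y (p * X n)| = |eval y p| * |y n| := by
          rw [map_mul, eval_X, abs_mul]
      _ ≤ (C * Real.exp (ε/2 * S)) * (2/ε * Real.exp (ε/2 * S)) :=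
          mul_le_mul (hC y) h2 (abs_nonneg _) (by positivity)
      _ = C * (2/ε) * Real.exp (ε * S) := by rw [← hexp]; ring

open MvPolynomial in
lemma abs_eval_diff_le_exp (v : Fin N → ℝ) (p : MvPolynomial (Fin N) ℝ) :
    ∀ ε : ℝ, 0 < ε → ∃ C : ℝ, 0 ≤ C ∧
      ∀ (y : Fin N → ℝ) (a : ℝ), |eval (y + a • v) p - eval y p| ≤
        |a| * (C * Real.exp (ε * (∑ i, |y i| + |a|))) := by
  induction p using MvPolynomial.induction_on with
  | C r =>
    intro ε hε
    refine ⟨0, le_rfl, fun y a => ?_⟩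
    simp
  | add p q hp hq =>
    intro ε hε
    obtain ⟨C₁, hC₁0, hC₁⟩ := hp ε hε
    obtain ⟨C₂, hC₂0, hC₂⟩ := hq ε hε
    refine ⟨C₁ + C₂, by linarith, fun y a => ?_⟩
    have h1 := hC₁ y a
    have h2 := hC₂ y a
    have : eval (y + a • v) (p + q) - eval y (p + q) =
        (eval (y + a • v) p - eval y p) + (eval (y + a • v) q - eval y q) := by
      simp [map_add]; ring
    rw [this]
    calc |(eval (y + a • v) p - eval y p) + (eval (y + a • v) q - eval y q)|
        ≤ |eval (y + a • v) p - eval y p| + |eval (y + a • v) q - eval y q| := abs_add_le _ _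
      _ ≤ |a| * (C₁ * Real.exp (ε * (∑ i, |y i| + |a|)))
          + |a| * (C₂ * Real.exp (ε * (∑ i, |y i| + |a|))) := add_le_add h1 h2
      _ = |a| * ((C₁ + C₂) * Real.exp (ε * (∑ i, |y i| + |a|))) := by ring
  | mul_X p n hp =>
    intro ε hε
    set K : ℝ := 1 + ∑ i, |v i| with hK
    have hv0 : 0 ≤ ∑ i, |v i| := Finset.sum_nonneg fun i _ => abs_nonneg _
    have hK1 : 1 ≤ K := by simp [hK]; linarith
    have hK0 : 0 < K := by linarith
    obtain ⟨C₁, hC₁0, hC₁⟩ := abs_eval_le_exp p (ε/(2*K)) (by positivity)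
    obtain ⟨C₂, hC₂0, hC₂⟩ := hp (ε/2) (by positivity)
    refine ⟨C₁ * |v n| + C₂ * (2/ε), by positivity, fun y a => ?_⟩
    set S := ∑ i, |y i| with hS
    have hS0 : 0 ≤ S := Finset.sum_nonneg fun i _ => abs_nonneg _
    set z := y + a • v with hz
    -- sum of |z i| is controlled
    have hzsum : ∑ i, |z i| ≤ K * (S + |a|) := by
      have h1 : ∀ i, |z i| ≤ |y i| + |a| * |v i| := by
        intro i
        simp only [hz, Pi.add_apply, Pi.smul_apply, smul_eq_mul]
        calc |y i + a * v i| ≤ |y i| + |a * v i| := abs_add_le _ _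
          _ = |y i| + |a| * |v i| := by rw [abs_mul]
      calc ∑ i, |z i| ≤ ∑ i, (|y i| + |a| * |v i|) :=
            Finset.sum_le_sum fun i _ => h1 i
        _ = S + |a| * ∑ i, |v i| := by rw [Finset.sum_add_distrib, ← Finset.mul_sum]
        _ ≤ K * (S + |a|) := by nlinarith [abs_nonneg a]
    have hevz : |eval z p| ≤ C₁ * Real.exp (ε/2 * (S + |a|)) := by
      have h1 := hC₁ z
      have h2 : ε/(2*K) * ∑ i, |z i| ≤ ε/2 * (S + |a|) := by
        calc ε/(2*K) * ∑ i, |z i| ≤ ε/(2*K) * (K * (S + |a|)) := by gcongr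
          _ = ε/2 * (S + |a|) := by field_simp
      calc |eval z p| ≤ C₁ * Real.exp (ε/(2*K) * ∑ i, |z i|) := h1
        _ ≤ C₁ * Real.exp (ε/2 * (S + |a|)) :=
            mul_le_mul_of_nonneg_left (Real.exp_le_exp.2 h2) hC₁0
    have hyn : |y n| ≤ 2/ε * Real.exp (ε/2 * (S + |a|)) := by
      have hynS : |y n| ≤ S + |a| := by
        have := Finset.single_le_sum (f := fun i => |y i|)
          (fun i _ => abs_nonneg _) (Finset.mem_univ n)
        calc |y n| ≤ S := this
          _ ≤ S + |a| := by linarith [abs_nonneg a]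
      have h3 : ε/2 * |y n| ≤ Real.exp (ε/2 * (S + |a|)) := by
        have := Real.add_one_le_exp (ε/2 * (S + |a|))
        have h4 : ε/2 * |y n| ≤ ε/2 * (S + |a|) := by gcongr
        linarith
      calc |y n| = 2/ε * (ε/2 * |y n|) := by field_simp
        _ ≤ 2/ε * Real.exp (ε/2 * (S + |a|)) := by gcongr
    have hzn : z n = y n + a * v n := by
      simp [hz]
    have hdiff : eval z (p * X n) - eval y (p * X n) =
        eval z p * (a * v n) + (eval z p - eval y p) * y n := by
      rw [map_mul, map_mul, eval_X, eval_X, hzn]; ring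
    have hexp : Real.exp (ε/2 * (S + |a|)) * Real.exp (ε/2 * (S + |a|))
        = Real.exp (ε * (S + |a|)) := by
      rw [← Real.exp_add]; congr 1; ring
    rw [hdiff]
    calc |eval z p * (a * v n) + (eval z p - eval y p) * y n|
        ≤ |eval z p| * (|a| * |v n|) + |eval z p - eval y p| * |y n| := by
          refine (abs_add_le _ _).trans ?_
          rw [abs_mul, abs_mul, abs_mul]
      _ ≤ (C₁ * Real.exp (ε/2 * (S + |a|))) * (|a| * |v n|)
          + (|a| * (C₂ * Real.exp (ε/2 * (S + |a|)))) * (2/ε * Real.exp (ε/2 * (S + |a|))) := by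
          refine add_le_add (mul_le_mul_of_nonneg_right hevz (by positivity)) ?_
          exact mul_le_mul (hC₂ y a) hyn (abs_nonneg _) (by positivity)
      _ = C₁ * (|a| * |v n|) * Real.exp (ε/2 * (S + |a|))
          + (C₂ * (2/ε) * |a|) * Real.exp (ε * (S + |a|)) := by rw [← hexp]; ring
      _ ≤ C₁ * (|a| * |v n|) * Real.exp (ε * (S + |a|))
          + (C₂ * (2/ε) * |a|) * Real.exp (ε * (S + |a|)) := by
          have h5 : Real.exp (ε/2 * (S + |a|)) ≤ Real.exp (ε * (S + |a|)) := by
            apply Real.exp_le_exp.2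
            nlinarith [abs_nonneg a]
          have h7 : (0:ℝ) ≤ C₁ * (|a| * |v n|) := by positivity
          have h6 := mul_le_mul_of_nonneg_left h5 h7
          linarith
      _ = |a| * ((C₁ * |v n| + C₂ * (2/ε)) * Real.exp (ε * (S + |a|))) := by ring



/-- The positive orthant. -/
def posOrth (N : ℕ) : Set (Fin N → ℝ) := Set.pi Set.univ fun _ => Set.Ioi (0:ℝ)

lemma mem_posOrth {y : Fin N → ℝ} : y ∈ posOrth N ↔ ∀ k, 0 < y k := by
  simp [posOrth, Set.mem_pi]

lemma measurableSet_posOrth : MeasurableSet (posOrth N) :=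
  MeasurableSet.univ_pi fun _ => measurableSet_Ioi

/-- The single-site weight. -/
def wt (s lam t : ℝ) : ℝ :=
  lam ^ (2 * s) / Real.Gamma (2 * s) * t ^ (2 * s - 1) * Real.exp (-(lam * t))

lemma gammaWeight_eq (s lam : ℝ) (y : Fin N → ℝ) :
    gammaWeight s lam y = ∏ i, wt s lam (y i) := rfl

lemma wt_pos {s lam t : ℝ} (hs : 0 < s) (hlam : 0 < lam) (ht : 0 < t) : 0 < wt s lam t := by
  have h1 : 0 < Real.Gamma (2 * s) := Real.Gamma_pos_of_pos (by linarith)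
  have h2 : 0 < lam ^ (2 * s) := Real.rpow_pos_of_pos hlam _
  have h3 : 0 < t ^ (2 * s - 1) := Real.rpow_pos_of_pos ht _
  have h4 := Real.exp_pos (-(lam * t))
  unfold wt; positivity

lemma gammaWeight_pos {s lam : ℝ} (hs : 0 < s) (hlam : 0 < lam) {y : Fin N → ℝ}
    (hy : y ∈ posOrth N) : 0 < gammaWeight s lam y := by
  rw [gammaWeight_eq]
  exact Finset.prod_pos fun k _ => wt_pos hs hlam (mem_posOrth.1 hy k)

lemma rpow_shift_one {t a r : ℝ} (ht : 0 < t) (ha : 0 ≤ a) :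
    (t + a) ^ r * (1 - a / (t + a)) ^ r = t ^ r := by
  have h1 : 0 < t + a := by linarith
  have h2 : 1 - a / (t + a) = t / (t + a) := by field_simp; ring
  rw [h2, ← Real.mul_rpow h1.le (div_nonneg ht.le h1.le)]
  congr 1
  field_simp

lemma rpow_shift_two {u a r : ℝ} (ha : 0 < a) (hau : a < u) :
    (u - a) ^ r = u ^ r * (1 - a / u) ^ r := by
  have hu : 0 < u := lt_trans ha hau
  have h2 : 1 - a / u = (u - a) / u := by field_simp
  rw [h2, ← Real.mul_rpow hu.le (div_nonneg (by linarith) hu.le)]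
  congr 1
  field_simp

lemma wt_shift_one (s lam : ℝ) {t a : ℝ} (ht : 0 < t) (ha : 0 ≤ a) :
    wt s lam (t + a) * (1 - a / (t + a)) ^ (2 * s - 1)
      = wt s lam t * Real.exp (-(lam * a)) := by
  unfold wt
  rw [mul_comm (_ * _ * _) ((1 - a / (t + a)) ^ (2 * s - 1))]
  have : lam ^ (2*s) / Real.Gamma (2*s) * (t+a) ^ (2*s-1) * Real.exp (-(lam * (t+a)))
      = lam ^ (2*s) / Real.Gamma (2*s) * (t+a) ^ (2*s-1) * (Real.exp (-(lam*t)) * Real.exp (-(lam*a))) := by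
    rw [← Real.exp_add]; ring_nf
  rw [this]
  have h3 := rpow_shift_one (r := 2*s-1) ht ha
  calc (1 - a / (t + a)) ^ (2*s-1) *
        (lam ^ (2*s) / Real.Gamma (2*s) * (t+a) ^ (2*s-1) * (Real.exp (-(lam*t)) * Real.exp (-(lam*a))))
      = lam ^ (2*s) / Real.Gamma (2*s) * ((t+a) ^ (2*s-1) * (1 - a / (t + a)) ^ (2*s-1)) *
        (Real.exp (-(lam*t)) * Real.exp (-(lam*a))) := by ring
    _ = lam ^ (2*s) / Real.Gamma (2*s) * t ^ (2*s-1) * Real.exp (-(lam*t)) * Real.exp (-(lam*a)) := by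
        rw [h3]; ring

lemma wt_shift_two (s lam : ℝ) {u a : ℝ} (ha : 0 < a) (hau : a < u) :
    wt s lam (u - a)
      = wt s lam u * ((1 - a / u) ^ (2 * s - 1) * Real.exp (lam * a)) := by
  unfold wt
  rw [rpow_shift_two ha hau]
  have : Real.exp (-(lam * (u - a))) = Real.exp (-(lam * u)) * Real.exp (lam * a) := by
    rw [← Real.exp_add]; ring_nf
  rw [this]; ring

lemma add_smul_unit_sub_apply {i j : ℕ} (hij : i ≠ j) (y : Fin N → ℝ) (a : ℝ) (k : Fin N) :
    (y + a • (unit N i - unit N j)) k =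
      if (k : ℕ) = i then y k + a else if (k : ℕ) = j then y k - a else y k := by
  simp only [Pi.add_apply, Pi.smul_apply, Pi.sub_apply, unit, smul_eq_mul]
  by_cases hki : (k : ℕ) = i
  · have h2 : ¬((k : ℕ) = j) := by rw [hki]; exact hij
    simp [hki, h2, hij]
  · by_cases hkj : (k : ℕ) = j
    · have h3 : j ≠ i := fun h => hij h.symm
      simp [hki, hkj, h3]
      ring
    · simp [hki, hkj]

lemma rho_shift_one {i : ℕ} (hi : i < N) (s lam : ℝ) {y : Fin N → ℝ} {a : ℝ}
    (hyi : 0 < y ⟨i, hi⟩) (ha : 0 ≤ a) :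
    gammaWeight s lam (y + a • unit N i) * (1 - a / (y ⟨i, hi⟩ + a)) ^ (2 * s - 1)
      = gammaWeight s lam y * Real.exp (-(lam * a)) := by
  set i0 : Fin N := ⟨i, hi⟩ with hi0def
  rw [gammaWeight_eq, gammaWeight_eq]
  rw [← Finset.mul_prod_erase Finset.univ (fun k => wt s lam ((y + a • unit N i) k))
        (Finset.mem_univ i0),
      ← Finset.mul_prod_erase Finset.univ (fun k => wt s lam (y k)) (Finset.mem_univ i0)]
  have hrest : ∏ k ∈ Finset.univ.erase i0, wt s lam ((y + a • unit N i) k)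
      = ∏ k ∈ Finset.univ.erase i0, wt s lam (y k) := by
    refine Finset.prod_congr rfl fun k hk => ?_
    have hki : (k : ℕ) ≠ i := fun h => (Finset.mem_erase.1 hk).1 (Fin.ext h)
    rw [add_smul_unit_apply, if_neg hki]
  have hii0 : (y + a • unit N i) i0 = y i0 + a := by
    rw [add_smul_unit_apply, if_pos rfl]
  rw [hrest, hii0]
  have hws := wt_shift_one s lam hyi ha
  calc wt s lam (y i0 + a) * (∏ k ∈ Finset.univ.erase i0, wt s lam (y k)) *
        (1 - a / (y i0 + a)) ^ (2 * s - 1)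
      = (wt s lam (y i0 + a) * (1 - a / (y i0 + a)) ^ (2 * s - 1)) *
        ∏ k ∈ Finset.univ.erase i0, wt s lam (y k) := by ring
    _ = (wt s lam (y i0) * Real.exp (-(lam * a))) *
        ∏ k ∈ Finset.univ.erase i0, wt s lam (y k) := by rw [hws]
    _ = wt s lam (y i0) * (∏ k ∈ Finset.univ.erase i0, wt s lam (y k)) *
        Real.exp (-(lam * a)) := by ring

lemma rho_shift_two {i j : ℕ} (hi : i < N) (hj : j < N) (hij : i ≠ j) (s lam : ℝ)
    {y : Fin N → ℝ} {a : ℝ} (hyi : 0 < y ⟨i, hi⟩) (ha : 0 < a) (haj : a < y ⟨j, hj⟩) :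
    gammaWeight s lam (y + a • (unit N i - unit N j)) * (1 - a / (y ⟨i, hi⟩ + a)) ^ (2 * s - 1)
      = gammaWeight s lam y * (1 - a / y ⟨j, hj⟩) ^ (2 * s - 1) := by
  set i0 : Fin N := ⟨i, hi⟩ with hi0def
  set j0 : Fin N := ⟨j, hj⟩ with hj0def
  have hj0i0 : j0 ≠ i0 := fun h => hij (by
    have := congrArg (fun (k : Fin N) => (k : ℕ)) h
    simpa using this.symm)
  have hj0mem : j0 ∈ Finset.univ.erase i0 := Finset.mem_erase.2 ⟨hj0i0, Finset.mem_univ _⟩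
  have split : ∀ g : Fin N → ℝ, ∏ k, g k =
      g i0 * (g j0 * ∏ k ∈ (Finset.univ.erase i0).erase j0, g k) := by
    intro g
    rw [← Finset.mul_prod_erase Finset.univ g (Finset.mem_univ i0),
        ← Finset.mul_prod_erase (Finset.univ.erase i0) g hj0mem]
  rw [gammaWeight_eq, gammaWeight_eq, split, split]
  have hrest : ∏ k ∈ (Finset.univ.erase i0).erase j0, wt s lam ((y + a • (unit N i - unit N j)) k)
      = ∏ k ∈ (Finset.univ.erase i0).erase j0, wt s lam (y k) := by
    refine Finset.prod_congr rfl fun k hk => ?_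
    have hkj : (k : ℕ) ≠ j := fun h => (Finset.mem_erase.1 hk).1 (Fin.ext h)
    have hki : (k : ℕ) ≠ i := fun h =>
      (Finset.mem_erase.1 (Finset.mem_erase.1 hk).2).1 (Fin.ext h)
    rw [add_smul_unit_sub_apply hij, if_neg hki, if_neg hkj]
  have hii0 : (y + a • (unit N i - unit N j)) i0 = y i0 + a := by
    rw [add_smul_unit_sub_apply hij, if_pos rfl]
  have hjj0 : (y + a • (unit N i - unit N j)) j0 = y j0 - a := by
    have hji : (j0 : ℕ) ≠ i := fun h => hij (h.symm)
    rw [add_smul_unit_sub_apply hij, if_neg hji, if_pos rfl]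
  rw [hrest, hii0, hjj0]
  have hws1 := wt_shift_one s lam hyi ha.le
  have hws2 := wt_shift_two s lam ha haj
  have hexp : Real.exp (-(lam * a)) * Real.exp (lam * a) = 1 := by
    rw [← Real.exp_add, neg_add_cancel, Real.exp_zero]
  calc wt s lam (y i0 + a) * (wt s lam (y j0 - a) *
          ∏ k ∈ (Finset.univ.erase i0).erase j0, wt s lam (y k)) *
        (1 - a / (y i0 + a)) ^ (2 * s - 1)
      = (wt s lam (y i0 + a) * (1 - a / (y i0 + a)) ^ (2 * s - 1)) * wt s lam (y j0 - a) *
          ∏ k ∈ (Finset.univ.erase i0).erase j0, wt s lam (y k) := by ring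
    _ = (wt s lam (y i0) * Real.exp (-(lam * a))) *
          (wt s lam (y j0) * ((1 - a / y j0) ^ (2 * s - 1) * Real.exp (lam * a))) *
          ∏ k ∈ (Finset.univ.erase i0).erase j0, wt s lam (y k) := by rw [hws1, hws2]
    _ = (Real.exp (-(lam * a)) * Real.exp (lam * a)) * (wt s lam (y i0) *
          (wt s lam (y j0) * ∏ k ∈ (Finset.univ.erase i0).erase j0, wt s lam (y k)) *
          (1 - a / y j0) ^ (2 * s - 1)) := by ring
    _ = wt s lam (y i0) * (wt s lam (y j0) *
          ∏ k ∈ (Finset.univ.erase i0).erase j0, wt s lam (y k)) *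
          (1 - a / y j0) ^ (2 * s - 1) := by rw [hexp, one_mul]

open MvPolynomial in
/-- Integrand (against the product measure on configuration × jump size) for a jump
taking `a` units of energy out of site `i` and displacing the configuration by `a • v`. -/
def Hout (s lam : ℝ) (p : MvPolynomial (Fin N) ℝ) (i : ℕ) (v : Fin N → ℝ) :
    ((Fin N → ℝ) × ℝ) → ℝ := fun z =>
  Set.indicator (posOrth N) (gammaWeight s lam) z.1 *
    Set.indicator (Set.Ioo 0 (get z.1 i))
      (fun a => (1 - a / get z.1 i) ^ (2 * s - 1) / a *
        (eval (z.1 + a • v) p - eval z.1 p)) z.2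

open MvPolynomial in
/-- Integrand for a reservoir injecting `a` units of energy at site `i`. -/
def Hin (s lam : ℝ) (p : MvPolynomial (Fin N) ℝ) (i : ℕ) :
    ((Fin N → ℝ) × ℝ) → ℝ := fun z =>
  Set.indicator (posOrth N) (gammaWeight s lam) z.1 *
    Set.indicator (Set.Ioi 0)
      (fun a => Real.exp (-(lam * a)) / a *
        (eval (z.1 + a • unit N i) p - eval z.1 p)) z.2

open MvPolynomial in
lemma Hout_shear_boundary (s lam : ℝ) (p : MvPolynomial (Fin N) ℝ) {i : ℕ} (hi : i < N) :
    ∀ z, Hout s lam p i (-(unit N i)) (shear N (unit N i) z) = - Hin s lam p i z := by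
  rintro ⟨y, a⟩
  set i0 : Fin N := ⟨i, hi⟩ with hi0def
  have hshear : (shear N (unit N i)) (y, a) = (y + a • unit N i, a) := rfl
  rw [hshear]
  simp only [Hout, Hin]
  have hget : get (y + a • unit N i) i = y i0 + a := by
    rw [get_eq hi, add_smul_unit_apply, if_pos rfl]
  by_cases hya : y ∈ posOrth N ∧ 0 < a
  · obtain ⟨hy, ha⟩ := hya
    have hmem1 : y + a • unit N i ∈ posOrth N := by
      refine mem_posOrth.2 fun k => ?_
      rw [add_smul_unit_apply]
      split
      · exact add_pos (mem_posOrth.1 hy k) ha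
      · exact mem_posOrth.1 hy k
    have hmem2 : a ∈ Set.Ioo 0 (get (y + a • unit N i) i) := by
      refine ⟨ha, ?_⟩
      rw [hget]
      linarith [mem_posOrth.1 hy i0]
    have harg : (y + a • unit N i) + a • (-(unit N i)) = y := by
      rw [smul_neg, add_neg_cancel_right]
    rw [Set.indicator_of_mem hmem1, Set.indicator_of_mem hmem2, Set.indicator_of_mem hy,
      Set.indicator_of_mem (Set.mem_Ioi.2 ha), hget, harg]
    have hρ := rho_shift_one hi s lam (mem_posOrth.1 hy i0) ha.le
    have step : gammaWeight s lam (y + a • unit N i) *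
          ((1 - a / (y i0 + a)) ^ (2 * s - 1) / a * (eval y p - eval (y + a • unit N i) p))
        = (gammaWeight s lam (y + a • unit N i) * (1 - a / (y i0 + a)) ^ (2 * s - 1)) *
          ((eval y p - eval (y + a • unit N i) p) / a) := by ring
    rw [step, hρ]
    ring
  · have hRHS : Set.indicator (posOrth N) (gammaWeight s lam) y *
        Set.indicator (Set.Ioi 0)
          (fun a => Real.exp (-(lam * a)) / a * (eval (y + a • unit N i) p - eval y p)) a = 0 := by
      by_cases hy : y ∈ posOrth N
      · have ha : ¬(0 < a) := fun h => hya ⟨hy, h⟩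
        rw [Set.indicator_of_notMem (s := Set.Ioi (0:ℝ)) (by simpa using ha), mul_zero]
      · rw [Set.indicator_of_notMem hy, zero_mul]
    rw [hRHS, neg_zero]
    by_cases ha : 0 < a
    · have hy : y ∉ posOrth N := fun h => hya ⟨h, ha⟩
      by_cases hyi : 0 < y i0
      · have hnot : y + a • unit N i ∉ posOrth N := by
          intro hmem
          apply hy
          refine mem_posOrth.2 fun k => ?_
          have hk := mem_posOrth.1 hmem k
          rw [add_smul_unit_apply] at hk
          by_cases hki : (k : ℕ) = i
          · have : k = i0 := Fin.ext hki
            rw [this]; exact hyi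
          · rwa [if_neg hki] at hk
        rw [Set.indicator_of_notMem hnot, zero_mul]
      · have hnot : a ∉ Set.Ioo 0 (get (y + a • unit N i) i) := by
          rw [hget]
          intro hmem
          exact hyi (by linarith [hmem.2])
        rw [Set.indicator_of_notMem hnot, mul_zero]
    · have hnot : a ∉ Set.Ioo 0 (get (y + a • unit N i) i) := fun hmem => ha hmem.1
      rw [Set.indicator_of_notMem hnot, mul_zero]

open MvPolynomial in
lemma Hout_shear_bulk (s lam : ℝ) (p : MvPolynomial (Fin N) ℝ) {i : ℕ} (hi1 : i + 1 < N) :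
    ∀ z, Hout s lam p i (unit N (i+1) - unit N i) (shear N (unit N i - unit N (i+1)) z)
      = - Hout s lam p (i+1) (unit N i - unit N (i+1)) z := by
  rintro ⟨y, a⟩
  have hi : i < N := Nat.lt_of_succ_lt hi1
  set i0 : Fin N := ⟨i, hi⟩ with hi0def
  set j0 : Fin N := ⟨i+1, hi1⟩ with hj0def
  have hij : i ≠ i + 1 := Nat.ne_of_lt (Nat.lt_succ_self i)
  have hshear : (shear N (unit N i - unit N (i+1))) (y, a)
      = (y + a • (unit N i - unit N (i+1)), a) := rfl
  rw [hshear]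
  simp only [Hout]
  set y' := y + a • (unit N i - unit N (i+1)) with hy'def
  have hcoord : ∀ k : Fin N, y' k =
      if (k : ℕ) = i then y k + a else if (k : ℕ) = i + 1 then y k - a else y k :=
    fun k => add_smul_unit_sub_apply hij y a k
  have hii0 : y' i0 = y i0 + a := by rw [hcoord, if_pos rfl]
  have hjj0 : y' j0 = y j0 - a := by
    have : (j0 : ℕ) ≠ i := fun h => hij h.symm
    rw [hcoord, if_neg this, if_pos rfl]
  have hget : get y' i = y i0 + a := by rw [get_eq hi]; exact hii0
  have hget2 : get y (i+1) = y j0 := get_eq hi1 y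
  by_cases hya : y ∈ posOrth N ∧ a ∈ Set.Ioo 0 (y j0)
  · obtain ⟨hy, ha, haj⟩ := hya
    have hmem1 : y' ∈ posOrth N := by
      refine mem_posOrth.2 fun k => ?_
      rw [hcoord]
      by_cases hki : (k : ℕ) = i
      · rw [if_pos hki]; exact add_pos (mem_posOrth.1 hy k) ha
      · rw [if_neg hki]
        by_cases hkj : (k : ℕ) = i + 1
        · rw [if_pos hkj]
          have : k = j0 := Fin.ext hkj
          rw [this]; linarith
        · rw [if_neg hkj]; exact mem_posOrth.1 hy k
    have hmem2 : a ∈ Set.Ioo 0 (get y' i) := by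
      refine ⟨ha, ?_⟩
      rw [hget]
      linarith [mem_posOrth.1 hy i0]
    have hmem2' : a ∈ Set.Ioo 0 (get y (i+1)) := by rw [hget2]; exact ⟨ha, haj⟩
    have harg : y' + a • (unit N (i+1) - unit N i) = y := by
      rw [hy'def]
      module
    rw [Set.indicator_of_mem hmem1, Set.indicator_of_mem hmem2, Set.indicator_of_mem hy,
      Set.indicator_of_mem hmem2', hget, hget2, harg]
    have hρ := rho_shift_two hi hi1 hij s lam (mem_posOrth.1 hy i0) ha haj
    have step : gammaWeight s lam y' *
          ((1 - a / (y i0 + a)) ^ (2 * s - 1) / a * (eval y p - eval y' p))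
        = (gammaWeight s lam y' * (1 - a / (y i0 + a)) ^ (2 * s - 1)) *
          ((eval y p - eval y' p) / a) := by ring
    rw [step, hρ]
    ring
  · have hRHS : Set.indicator (posOrth N) (gammaWeight s lam) y *
        Set.indicator (Set.Ioo 0 (get y (i+1)))
          (fun a => (1 - a / get y (i+1)) ^ (2 * s - 1) / a *
            (eval (y + a • (unit N i - unit N (i+1))) p - eval y p)) a = 0 := by
      by_cases hy : y ∈ posOrth N
      · have hnot : a ∉ Set.Ioo 0 (get y (i+1)) := by
          rw [hget2]; intro hmem; exact hya ⟨hy, hmem⟩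
        rw [Set.indicator_of_notMem hnot, mul_zero]
      · rw [Set.indicator_of_notMem hy, zero_mul]
    rw [hRHS, neg_zero]
    by_cases ha : 0 < a
    · by_cases hyi : 0 < y i0
      · have hnot : y' ∉ posOrth N := by
          intro hmem
          apply hya
          have hk : ∀ k : Fin N, 0 < y' k := mem_posOrth.1 hmem
          have hyj : a < y j0 := by
            have := hk j0
            rw [hjj0] at this
            linarith
          refine ⟨mem_posOrth.2 fun k => ?_, ha, hyj⟩
          have hk2 := hk k
          rw [hcoord] at hk2
          by_cases hki : (k : ℕ) = i
          · have : k = i0 := Fin.ext hki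
            rw [this]; exact hyi
          · by_cases hkj : (k : ℕ) = i + 1
            · have : k = j0 := Fin.ext hkj
              rw [this]; linarith
            · rwa [if_neg hki, if_neg hkj] at hk2
        rw [Set.indicator_of_notMem hnot, zero_mul]
      · have hnot : a ∉ Set.Ioo 0 (get y' i) := by
          rw [hget]
          intro hmem
          exact hyi (by linarith [hmem.2])
        rw [Set.indicator_of_notMem hnot, mul_zero]
    · have hnot : a ∉ Set.Ioo 0 (get y' i) := fun hmem => ha hmem.1
      rw [Set.indicator_of_notMem hnot, mul_zero]

lemma measurable_rpow_const (c : ℝ) : Measurable fun x : ℝ => x ^ c :=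
  measurable_of_continuousOn_compl_singleton 0 fun x hx =>
    (Real.continuousAt_rpow_const x c (Or.inl hx)).continuousWithinAt

lemma measurable_get (i : ℕ) : Measurable fun y : Fin N → ℝ => get y i := by
  by_cases h : i < N
  · simp only [get, dif_pos h]
    exact measurable_pi_apply _
  · simp only [get, dif_neg h]
    exact measurable_const

lemma measurable_wt (s lam : ℝ) : Measurable (wt s lam) := by
  unfold wt
  exact (((measurable_rpow_const (2*s-1)).const_mul _).mul
    (((measurable_id.const_mul lam).neg).exp))

lemma measurable_gammaWeight (s lam : ℝ) :
    Measurable (gammaWeight s lam : (Fin N → ℝ) → ℝ) := by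
  have : (gammaWeight s lam : (Fin N → ℝ) → ℝ) = fun y => ∏ i, wt s lam (y i) := by
    funext y; exact gammaWeight_eq s lam y
  rw [this]
  exact Finset.measurable_prod _ fun i _ =>
    (measurable_wt s lam).comp (measurable_pi_apply i)

open MvPolynomial in
lemma measurable_Hout (s lam : ℝ) (p : MvPolynomial (Fin N) ℝ) (i : ℕ) (v : Fin N → ℝ) :
    Measurable (Hout s lam p i v) := by
  unfold Hout
  refine Measurable.mul ?_ ?_
  · exact (((measurable_gammaWeight s lam).indicator measurableSet_posOrth).comp measurable_fst)
  · have heq : (fun z : (Fin N → ℝ) × ℝ => Set.indicator (Set.Ioo 0 (get z.1 i))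
        (fun a => (1 - a / get z.1 i) ^ (2 * s - 1) / a *
          (eval (z.1 + a • v) p - eval z.1 p)) z.2)
        = Set.indicator {z : (Fin N → ℝ) × ℝ | 0 < z.2 ∧ z.2 < get z.1 i}
          (fun z => (1 - z.2 / get z.1 i) ^ (2 * s - 1) / z.2 *
            (eval (z.1 + z.2 • v) p - eval z.1 p)) := by
      funext z
      rw [Set.indicator_apply, Set.indicator_apply]
      simp only [Set.mem_Ioo, Set.mem_setOf_eq]
    rw [heq]
    refine Measurable.indicator ?_ ?_
    · refine Measurable.mul ?_ ?_
      · exact ((measurable_rpow_const _).comp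
          (measurable_const.sub (measurable_snd.div ((measurable_get i).comp measurable_fst)))).div
          measurable_snd
      · exact (((MvPolynomial.continuous_eval p).comp
            (continuous_fst.add (continuous_snd.smul continuous_const))).measurable).sub
          (((MvPolynomial.continuous_eval p).comp continuous_fst).measurable)
    · rw [Set.setOf_and]
      exact (measurableSet_lt measurable_const measurable_snd).inter
        (measurableSet_lt measurable_snd ((measurable_get i).comp measurable_fst))

open MvPolynomial in
lemma measurable_Hin (s lam : ℝ) (p : MvPolynomial (Fin N) ℝ) (i : ℕ) :
    Measurable (Hin s lam p i) := by
  unfold Hin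
  refine Measurable.mul ?_ ?_
  · exact (((measurable_gammaWeight s lam).indicator measurableSet_posOrth).comp measurable_fst)
  · have heq : (fun z : (Fin N → ℝ) × ℝ => Set.indicator (Set.Ioi 0)
        (fun a => Real.exp (-(lam * a)) / a *
          (eval (z.1 + a • unit N i) p - eval z.1 p)) z.2)
        = Set.indicator {z : (Fin N → ℝ) × ℝ | 0 < z.2}
          (fun z => Real.exp (-(lam * z.2)) / z.2 *
            (eval (z.1 + z.2 • unit N i) p - eval z.1 p)) := by
      funext z
      rw [Set.indicator_apply, Set.indicator_apply]
      simp only [Set.mem_Ioi, Set.mem_setOf_eq]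
    rw [heq]
    refine Measurable.indicator ?_ ?_
    · refine Measurable.mul ?_ ?_
      · exact (((measurable_snd.const_mul lam).neg).exp).div measurable_snd
      · exact (((MvPolynomial.continuous_eval p).comp
            (continuous_fst.add (continuous_snd.smul continuous_const))).measurable).sub
          (((MvPolynomial.continuous_eval p).comp continuous_fst).measurable)
    · exact measurableSet_lt measurable_const measurable_snd

lemma integrableOn_rpow_exp {r c : ℝ} (hr : -1 < r) (hc : 0 < c) :
    IntegrableOn (fun t : ℝ => t ^ r * Real.exp (-(c * t))) (Set.Ioi 0) := by
  have h := integrableOn_rpow_mul_exp_neg_mul_rpow hr zero_lt_one hc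
  refine h.congr_fun (fun x _ => ?_) measurableSet_Ioi
  simp only [Real.rpow_one, neg_mul]

/-- One-site majorant weight. -/
def psi (c0 r c : ℝ) : ℝ → ℝ :=
  Set.indicator (Set.Ioi 0) fun t => c0 * (t ^ r * Real.exp (-(c * t)))

lemma integrable_psi {r c : ℝ} (c0 : ℝ) (hr : -1 < r) (hc : 0 < c) :
    Integrable (psi c0 r c) := by
  unfold psi
  rw [integrable_indicator_iff measurableSet_Ioi]
  exact (integrableOn_rpow_exp hr hc).const_mul c0

lemma psi_nonneg {c0 : ℝ} (hc0 : 0 ≤ c0) (r c t : ℝ) : 0 ≤ psi c0 r c t := by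
  unfold psi
  rw [Set.indicator_apply]
  split
  · next ht =>
    have : (0:ℝ) < t := ht
    positivity
  · exact le_refl 0

lemma measurable_psi (c0 r c : ℝ) : Measurable (psi c0 r c) :=
  (((measurable_rpow_const r).mul ((measurable_id.const_mul c).neg.exp)).const_mul c0).indicator
    measurableSet_Ioi

lemma psi_of_pos {c0 r c t : ℝ} (ht : 0 < t) :
    psi c0 r c t = c0 * (t ^ r * Real.exp (-(c * t))) :=
  Set.indicator_of_mem ht _

lemma integrableOn_shift_rpow (u : ℝ) {r : ℝ} (hr : -1 < r) :
    IntegrableOn (fun a : ℝ => (u - a) ^ r) (Set.Ioo 0 u) := by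
  by_cases hu : 0 < u
  · have h1 : IntervalIntegrable (fun x : ℝ => x ^ r) volume 0 u :=
      intervalIntegral.intervalIntegrable_rpow' hr
    have h2 := h1.comp_sub_left u
    rw [sub_zero, sub_self] at h2
    exact (intervalIntegrable_iff_integrableOn_Ioo_of_le hu.le).1 h2.symm
  · rw [Set.Ioo_eq_empty (by intro h; exact absurd h (not_lt.2 (le_of_not_gt hu)) )]
    exact integrableOn_empty

lemma integral_shift_rpow {u r : ℝ} (hu : 0 < u) (hr : -1 < r) :
    ∫ a in Set.Ioo 0 u, (u - a) ^ r = u ^ (r + 1) / (r + 1) := by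
  have h1 : ∫ a in Set.Ioo 0 u, (u - a) ^ r = ∫ a in (0:ℝ)..u, (u - a) ^ r := by
    rw [intervalIntegral.integral_of_le hu.le, integral_Ioc_eq_integral_Ioo]
  rw [h1, intervalIntegral.integral_comp_sub_left (fun x : ℝ => x ^ r) u, sub_zero, sub_self,
    integral_rpow (Or.inl hr), Real.zero_rpow (by linarith), sub_zero]

set_option maxHeartbeats 1000000 in
open MvPolynomial in
lemma integrable_Hin {s lam : ℝ} (hs : 0 < s) (hlam : 0 < lam) (p : MvPolynomial (Fin N) ℝ)
    (i : ℕ) : Integrable (Hin s lam p i) ((volume : Measure (Fin N → ℝ)).prod volume) := by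
  obtain ⟨C, hC0, hC⟩ := abs_eval_diff_le_exp (unit N i) p (lam/4) (by positivity)
  set c0 : ℝ := lam ^ (2*s) / Real.Gamma (2*s) with hc0def
  have hc0 : 0 < c0 := div_pos (Real.rpow_pos_of_pos hlam _)
    (Real.Gamma_pos_of_pos (by linarith))
  set F : (Fin N → ℝ) → ℝ := fun y => ∏ k, psi c0 (2*s-1) (3*lam/4) (y k) with hFdef
  set G : ℝ → ℝ := fun a =>
    C * Set.indicator (Set.Ioi 0) (fun a => Real.exp (-(3*lam/4) * a)) a with hGdef
  have hFint : Integrable F :=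
    Integrable.fintype_prod (f := fun _ : Fin N => psi c0 (2*s-1) (3*lam/4))
      (fun _ => integrable_psi c0 (by linarith) (by positivity))
  have hGint : Integrable G := by
    refine Integrable.const_mul ?_ C
    rw [integrable_indicator_iff measurableSet_Ioi]
    exact exp_neg_integrableOn_Ioi 0 (by positivity)
  have hFnonneg : ∀ y, 0 ≤ F y :=
    fun y => Finset.prod_nonneg fun k _ => psi_nonneg hc0.le _ _ _
  have hGnonneg : ∀ a, 0 ≤ G a := by
    intro a
    refine mul_nonneg hC0 (Set.indicator_nonneg (fun x _ => (Real.exp_pos _).le) a)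
  have hprod : ∀ y : Fin N → ℝ, y ∈ posOrth N →
      F y = gammaWeight s lam y * Real.exp (lam/4 * ∑ k, y k) := by
    intro y hy
    rw [gammaWeight_eq]
    have hear : Real.exp (lam/4 * ∑ k, y k) = ∏ k, Real.exp (lam/4 * y k) := by
      rw [← Real.exp_sum]; congr 1; rw [Finset.mul_sum]
    rw [hear, ← Finset.prod_mul_distrib]
    refine Finset.prod_congr rfl fun k _ => ?_
    have hyk := mem_posOrth.1 hy k
    rw [psi_of_pos hyk]
    unfold wt
    have hee : Real.exp (-(lam * y k)) * Real.exp (lam/4 * y k)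
        = Real.exp (-(3*lam/4 * y k)) := by
      rw [← Real.exp_add]; congr 1; ring
    rw [← hee, ← hc0def]
    ring
  have hbound : ∀ z : (Fin N → ℝ) × ℝ, ‖Hin s lam p i z‖ ≤ F z.1 * G z.2 := by
    rintro ⟨y, a⟩
    by_cases hya : y ∈ posOrth N ∧ 0 < a
    · obtain ⟨hy, ha⟩ := hya
      have hρpos := gammaWeight_pos hs hlam hy
      have hHeq : Hin s lam p i (y, a) = gammaWeight s lam y *
          (Real.exp (-(lam*a))/a * (eval (y + a • unit N i) p - eval y p)) := by
        rw [Hin, Set.indicator_of_mem hy, Set.indicator_of_mem (Set.mem_Ioi.2 ha)]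
      rw [hHeq, Real.norm_eq_abs, abs_mul, abs_mul, abs_of_nonneg hρpos.le, abs_div,
        abs_of_nonneg (Real.exp_pos _).le, abs_of_pos ha]
      have hdiff := hC y a
      have hsum : ∑ k, |y k| = ∑ k, y k :=
        Finset.sum_congr rfl fun k _ => abs_of_pos (mem_posOrth.1 hy k)
      rw [hsum, abs_of_pos ha] at hdiff
      calc gammaWeight s lam y *
            (Real.exp (-(lam*a))/a * |eval (y + a • unit N i) p - eval y p|)
          ≤ gammaWeight s lam y * (Real.exp (-(lam*a))/a *
              (a * (C * Real.exp (lam/4 * (∑ k, y k + a))))) := by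
            refine mul_le_mul_of_nonneg_left (mul_le_mul_of_nonneg_left hdiff ?_) hρpos.le
            exact div_nonneg (Real.exp_pos _).le ha.le
        _ = (gammaWeight s lam y * Real.exp (lam/4 * ∑ k, y k)) *
              (C * Real.exp (-(3*lam/4) * a)) := by
            have h1 : Real.exp (lam/4 * (∑ k, y k + a))
                = Real.exp (lam/4 * ∑ k, y k) * Real.exp (lam/4 * a) := by
              rw [← Real.exp_add]; congr 1; ring
            have h2 : Real.exp (-(3*lam/4) * a)
                = Real.exp (-(lam*a)) * Real.exp (lam/4 * a) := by
              rw [← Real.exp_add]; congr 1; ring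
            rw [h1, h2]
            field_simp
        _ = F y * G a := by
            rw [hprod y hy, hGdef]
            simp only
            rw [Set.indicator_of_mem (Set.mem_Ioi.2 ha)]
    · have hzero : Hin s lam p i (y, a) = 0 := by
        rw [Hin]
        by_cases hy : y ∈ posOrth N
        · have ha : ¬(0 < a) := fun h => hya ⟨hy, h⟩
          rw [Set.indicator_of_notMem (s := Set.Ioi (0:ℝ)) (by simpa using ha), mul_zero]
        · rw [Set.indicator_of_notMem hy, zero_mul]
      rw [hzero, norm_zero]
      exact mul_nonneg (hFnonneg y) (hGnonneg a)
  exact Integrable.mono' (hFint.mul_prod hGint)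
    ((measurable_Hin s lam p i).aestronglyMeasurable) (Filter.Eventually.of_forall hbound)

lemma prod_psi_eq {s lam : ℝ} {y : Fin N → ℝ} (hy : y ∈ posOrth N) :
    ∏ k, psi (lam ^ (2*s) / Real.Gamma (2*s)) (2*s-1) (3*lam/4) (y k)
      = gammaWeight s lam y * Real.exp (lam/4 * ∑ k, y k) := by
  rw [gammaWeight_eq]
  have hear : Real.exp (lam/4 * ∑ k, y k) = ∏ k, Real.exp (lam/4 * y k) := by
    rw [← Real.exp_sum]; congr 1; rw [Finset.mul_sum]
  rw [hear, ← Finset.prod_mul_distrib]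
  refine Finset.prod_congr rfl fun k _ => ?_
  have hyk := mem_posOrth.1 hy k
  rw [psi_of_pos hyk]
  unfold wt
  have hee : Real.exp (-(lam * y k)) * Real.exp (lam/4 * y k)
      = Real.exp (-(3*lam/4 * y k)) := by
    rw [← Real.exp_add]; congr 1; ring
  rw [← hee]
  ring

set_option maxHeartbeats 1000000 in
open MvPolynomial in
lemma integrable_Hout {s lam : ℝ} (hs : 0 < s) (hlam : 0 < lam) (p : MvPolynomial (Fin N) ℝ)
    {i : ℕ} (hi : i < N) (v : Fin N → ℝ) :
    Integrable (Hout s lam p i v) ((volume : Measure (Fin N → ℝ)).prod volume) := by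
  obtain ⟨C, hC0, hC⟩ := abs_eval_diff_le_exp v p (lam/4) (by positivity)
  set i0 : Fin N := ⟨i, hi⟩ with hi0def
  set c0 : ℝ := lam ^ (2*s) / Real.Gamma (2*s) with hc0def
  have hc0 : 0 < c0 := div_pos (Real.rpow_pos_of_pos hlam _)
    (Real.Gamma_pos_of_pos (by linarith))
  have hr : (-1 : ℝ) < 2*s - 1 := by linarith
  set F : (Fin N → ℝ) → ℝ :=
    fun y => ∏ k ∈ Finset.univ.erase i0, psi c0 (2*s-1) (3*lam/4) (y k) with hFdef
  have hFnonneg : ∀ y, 0 ≤ F y :=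
    fun y => Finset.prod_nonneg fun k _ => psi_nonneg hc0.le _ _ _
  have hFmeas : Measurable F :=
    Finset.measurable_prod _ fun k _ =>
      (measurable_psi c0 (2*s-1) (3*lam/4)).comp (measurable_pi_apply k)
  set M0 : ((Fin N → ℝ) × ℝ) → ℝ := fun z =>
    F z.1 * (c0 * Real.exp (-(lam/2) * z.1 i0) *
      Set.indicator (Set.Ioo 0 (z.1 i0)) (fun a => (z.1 i0 - a) ^ (2*s-1)) z.2) with hM0def
  have hindmeas : Measurable (fun z : (Fin N → ℝ) × ℝ =>
      Set.indicator (Set.Ioo 0 (z.1 i0)) (fun a => (z.1 i0 - a) ^ (2*s-1)) z.2) := by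
    have heq : (fun z : (Fin N → ℝ) × ℝ =>
        Set.indicator (Set.Ioo 0 (z.1 i0)) (fun a => (z.1 i0 - a) ^ (2*s-1)) z.2)
        = Set.indicator {z : (Fin N → ℝ) × ℝ | 0 < z.2 ∧ z.2 < z.1 i0}
          (fun z => (z.1 i0 - z.2) ^ (2*s-1)) := by
      funext z
      rw [Set.indicator_apply, Set.indicator_apply]
      simp only [Set.mem_Ioo, Set.mem_setOf_eq]
    rw [heq]
    refine Measurable.indicator ?_ ?_
    · exact (measurable_rpow_const _).comp
        (((measurable_pi_apply i0).comp measurable_fst).sub measurable_snd)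
    · rw [Set.setOf_and]
      exact (measurableSet_lt measurable_const measurable_snd).inter
        (measurableSet_lt measurable_snd ((measurable_pi_apply i0).comp measurable_fst))
  have hM0meas : Measurable M0 := by
    refine (hFmeas.comp measurable_fst).mul (Measurable.mul ?_ hindmeas)
    exact (((by fun_prop) :
      Measurable fun z : (Fin N → ℝ) × ℝ => -(lam/2) * z.1 i0).exp).const_mul c0
  have hM0nonneg : ∀ z, 0 ≤ M0 z := by
    rintro ⟨y, a⟩
    refine mul_nonneg (hFnonneg y) (mul_nonneg (by positivity) ?_)
    refine Set.indicator_nonneg (fun x hx => ?_) a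
    exact Real.rpow_nonneg (by linarith [hx.2] : (0:ℝ) ≤ y i0 - x) _
  have hM0int : Integrable M0 ((volume : Measure (Fin N → ℝ)).prod volume) := by
    refine (integrable_prod_iff hM0meas.aestronglyMeasurable).2 ⟨?_, ?_⟩
    · refine Filter.Eventually.of_forall fun y => ?_
      have hbase : Integrable
          (fun a => Set.indicator (Set.Ioo 0 (y i0)) (fun a => (y i0 - a) ^ (2*s-1)) a) := by
        rw [integrable_indicator_iff measurableSet_Ioo]
        exact integrableOn_shift_rpow (y i0) hr
      have hcm := hbase.const_mul (F y * (c0 * Real.exp (-(lam/2) * y i0)))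
      refine hcm.congr (Filter.Eventually.of_forall fun a => ?_)
      simp only [hM0def]
      ring
    · have heq : (fun y : Fin N → ℝ => ∫ a, ‖M0 (y, a)‖)
          = fun y => F y * psi (c0/(2*s)) (2*s) (lam/2) (y i0) := by
        funext y
        by_cases hu : 0 < y i0
        · have hnorm : (fun a => ‖M0 (y, a)‖) = fun a =>
              (F y * (c0 * Real.exp (-(lam/2) * y i0))) *
                Set.indicator (Set.Ioo 0 (y i0)) (fun a => (y i0 - a) ^ (2*s-1)) a := by
            funext a
            rw [Real.norm_eq_abs, abs_of_nonneg (hM0nonneg (y, a))]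
            simp only [hM0def]
            ring
          rw [hnorm, integral_const_mul, integral_indicator measurableSet_Ioo,
            integral_shift_rpow hu hr]
          have h1 : (2*s - 1 + 1) = 2*s := by ring
          rw [h1, psi_of_pos hu]
          have hs2 : (2*s) ≠ 0 := by positivity
          field_simp
        · have hempty : Set.Ioo 0 (y i0) = ∅ := Set.Ioo_eq_empty hu
          have hzero : ∀ a : ℝ, M0 (y, a) = 0 := by
            intro a
            simp only [hM0def, hempty, Set.indicator_empty, Pi.zero_apply, mul_zero]
          have hfn : (fun a => ‖M0 (y, a)‖) = fun _ => (0:ℝ) := by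
            funext a; rw [hzero a, norm_zero]
          rw [hfn, integral_zero]
          have hpsi0 : psi (c0/(2*s)) (2*s) (lam/2) (y i0) = 0 := by
            simp only [psi]
            exact Set.indicator_of_notMem (by simpa using hu) _
          rw [hpsi0, mul_zero]
      rw [heq]
      set f : Fin N → ℝ → ℝ := fun k =>
        if k = i0 then psi (c0/(2*s)) (2*s) (lam/2) else psi c0 (2*s-1) (3*lam/4) with hfdef
      have hfint : ∀ k, Integrable (f k) := by
        intro k
        by_cases hk : k = i0
        · rw [hfdef]; simp only [hk, if_pos rfl]
          exact integrable_psi _ (by linarith) (by positivity)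
        · rw [hfdef]; simp only [if_neg hk]
          exact integrable_psi _ (by linarith) (by positivity)
      have hprodint := Integrable.fintype_prod (f := f) hfint
      refine hprodint.congr (Filter.Eventually.of_forall fun y => ?_)
      show (∏ k, f k (y k)) = F y * psi (c0/(2*s)) (2*s) (lam/2) (y i0)
      rw [← Finset.mul_prod_erase Finset.univ (fun k => f k (y k)) (Finset.mem_univ i0)]
      have h2 : ∏ k ∈ Finset.univ.erase i0, f k (y k)
          = ∏ k ∈ Finset.univ.erase i0, psi c0 (2*s-1) (3*lam/4) (y k) := by
        refine Finset.prod_congr rfl fun k hk => ?_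
        rw [hfdef]
        simp only [if_neg (Finset.mem_erase.1 hk).1]
      rw [h2]
      have h3 : f i0 = psi (c0/(2*s)) (2*s) (lam/2) := by rw [hfdef]; simp
      rw [h3, hFdef]
      exact mul_comm _ _
  have hbound : ∀ z, ‖Hout s lam p i v z‖ ≤ C * M0 z := by
    rintro ⟨y, a⟩
    by_cases hya : y ∈ posOrth N ∧ a ∈ Set.Ioo 0 (get y i)
    · obtain ⟨hy, ha, hau'⟩ := hya
      have hau : a < y i0 := by rwa [get_eq hi] at hau'
      have hu : 0 < y i0 := lt_trans ha hau
      have hρpos := gammaWeight_pos hs hlam hy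
      have hker : (0:ℝ) < (1 - a / get y i) ^ (2*s-1) := by
        rw [get_eq hi]
        refine Real.rpow_pos_of_pos ?_ _
        have hd : a / y i0 < 1 := (div_lt_one hu).2 hau
        linarith
      have hHeq : Hout s lam p i v (y, a) = gammaWeight s lam y *
          ((1 - a / get y i) ^ (2*s-1) / a * (eval (y + a • v) p - eval y p)) := by
        rw [Hout, Set.indicator_of_mem hy, Set.indicator_of_mem (Set.mem_Ioo.2 ⟨ha, hau'⟩)]
      rw [hHeq, Real.norm_eq_abs, abs_mul, abs_mul, abs_of_nonneg hρpos.le, abs_div,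
        abs_of_nonneg hker.le, abs_of_pos ha]
      have hdiff := hC y a
      have hsum : ∑ k, |y k| = ∑ k, y k :=
        Finset.sum_congr rfl fun k _ => abs_of_pos (mem_posOrth.1 hy k)
      rw [hsum, abs_of_pos ha] at hdiff
      have hPP := prod_psi_eq (s := s) (lam := lam) hy
      rw [← hc0def] at hPP
      have hsplit2 : ∏ k, psi c0 (2*s-1) (3*lam/4) (y k)
          = psi c0 (2*s-1) (3*lam/4) (y i0) * F y := by
        rw [hFdef, ← Finset.mul_prod_erase Finset.univ
          (fun k => psi c0 (2*s-1) (3*lam/4) (y k)) (Finset.mem_univ i0)]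
      have hrp : (y i0) ^ (2*s-1) * (1 - a / y i0) ^ (2*s-1)
          = (y i0 - a) ^ (2*s-1) := (rpow_shift_two ha hau).symm
      have hex : Real.exp (-(3*lam/4 * y i0)) * Real.exp (lam/4 * y i0)
          = Real.exp (-(lam/2) * y i0) := by
        rw [← Real.exp_add]; congr 1; ring
      have hkey : gammaWeight s lam y * ((1 - a / get y i) ^ (2*s-1) *
            (Real.exp (lam/4 * ∑ k, y k) * Real.exp (lam/4 * y i0)))
          = F y * (c0 * Real.exp (-(lam/2) * y i0) * (y i0 - a) ^ (2*s-1)) := by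
        calc gammaWeight s lam y * ((1 - a / get y i) ^ (2*s-1) *
              (Real.exp (lam/4 * ∑ k, y k) * Real.exp (lam/4 * y i0)))
            = (gammaWeight s lam y * Real.exp (lam/4 * ∑ k, y k)) *
              ((1 - a / get y i) ^ (2*s-1) * Real.exp (lam/4 * y i0)) := by ring
          _ = (psi c0 (2*s-1) (3*lam/4) (y i0) * F y) *
              ((1 - a / get y i) ^ (2*s-1) * Real.exp (lam/4 * y i0)) := by
              rw [← hPP, hsplit2]
          _ = F y * (c0 * ((y i0) ^ (2*s-1) * (1 - a / y i0) ^ (2*s-1)) *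
              (Real.exp (-(3*lam/4 * y i0)) * Real.exp (lam/4 * y i0))) := by
              rw [psi_of_pos hu, get_eq hi]; ring
          _ = F y * (c0 * Real.exp (-(lam/2) * y i0) * (y i0 - a) ^ (2*s-1)) := by
              rw [hrp, hex]; ring
      calc gammaWeight s lam y *
            ((1 - a / get y i) ^ (2*s-1) / a * |eval (y + a • v) p - eval y p|)
          ≤ gammaWeight s lam y * ((1 - a / get y i) ^ (2*s-1) / a *
              (a * (C * Real.exp (lam/4 * (∑ k, y k + a))))) := by
            refine mul_le_mul_of_nonneg_left (mul_le_mul_of_nonneg_left hdiff ?_) hρpos.le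
            exact div_nonneg hker.le ha.le
        _ ≤ gammaWeight s lam y * ((1 - a / get y i) ^ (2*s-1) / a *
              (a * (C * (Real.exp (lam/4 * ∑ k, y k) * Real.exp (lam/4 * y i0))))) := by
            have hsplit : Real.exp (lam/4 * (∑ k, y k + a))
                = Real.exp (lam/4 * ∑ k, y k) * Real.exp (lam/4 * a) := by
              rw [← Real.exp_add]; congr 1; ring
            rw [hsplit]
            have hmono : Real.exp (lam/4 * a) ≤ Real.exp (lam/4 * y i0) := by
              apply Real.exp_le_exp.2
              nlinarith
            have hfac : (0:ℝ) ≤ gammaWeight s lam y * ((1 - a / get y i) ^ (2*s-1) / a *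
                (a * (C * Real.exp (lam/4 * ∑ k, y k)))) := by
              refine mul_nonneg hρpos.le (mul_nonneg (div_nonneg hker.le ha.le)
                (mul_nonneg ha.le (mul_nonneg hC0 (Real.exp_pos _).le)))
            calc gammaWeight s lam y * ((1 - a / get y i) ^ (2*s-1) / a *
                  (a * (C * (Real.exp (lam/4 * ∑ k, y k) * Real.exp (lam/4 * a)))))
                = (gammaWeight s lam y * ((1 - a / get y i) ^ (2*s-1) / a *
                  (a * (C * Real.exp (lam/4 * ∑ k, y k))))) * Real.exp (lam/4 * a) := by ring
              _ ≤ (gammaWeight s lam y * ((1 - a / get y i) ^ (2*s-1) / a *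
                  (a * (C * Real.exp (lam/4 * ∑ k, y k))))) * Real.exp (lam/4 * y i0) :=
                  mul_le_mul_of_nonneg_left hmono hfac
              _ = gammaWeight s lam y * ((1 - a / get y i) ^ (2*s-1) / a *
                  (a * (C * (Real.exp (lam/4 * ∑ k, y k) * Real.exp (lam/4 * y i0))))) := by
                  ring
        _ = C * M0 (y, a) := by
            have hane : a ≠ 0 := ne_of_gt ha
            have hexpand : gammaWeight s lam y * ((1 - a / get y i) ^ (2*s-1) / a *
                  (a * (C * (Real.exp (lam/4 * ∑ k, y k) * Real.exp (lam/4 * y i0)))))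
                = C * (gammaWeight s lam y * ((1 - a / get y i) ^ (2*s-1) *
                  (Real.exp (lam/4 * ∑ k, y k) * Real.exp (lam/4 * y i0)))) := by
              field_simp
            rw [hexpand, hkey]
            simp only [hM0def]
            rw [Set.indicator_of_mem (Set.mem_Ioo.2 ⟨ha, hau⟩)]
    · have hzero : Hout s lam p i v (y, a) = 0 := by
        rw [Hout]
        by_cases hy : y ∈ posOrth N
        · have hnot : a ∉ Set.Ioo 0 (get y i) := fun h => hya ⟨hy, h⟩
          rw [Set.indicator_of_notMem hnot, mul_zero]
        · rw [Set.indicator_of_notMem hy, zero_mul]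
      rw [hzero, norm_zero]
      exact mul_nonneg hC0 (hM0nonneg (y, a))
  exact Integrable.mono' (hM0int.const_mul C)
    ((measurable_Hout s lam p i v).aestronglyMeasurable) (Filter.Eventually.of_forall hbound)

lemma pair_cancel (v : Fin N → ℝ) {H1 H2 : ((Fin N → ℝ) × ℝ) → ℝ}
    (hid : ∀ z, H1 (shear N v z) = - H2 z) :
    (∫ z, H1 z ∂((volume : Measure (Fin N → ℝ)).prod volume))
      + (∫ z, H2 z ∂((volume : Measure (Fin N → ℝ)).prod volume)) = 0 := by
  have hmp := shear_measurePreserving N v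
  have hcomp := hmp.integral_comp (shear N v).measurableEmbedding H1
  have h1 : (fun z => H1 (shear N v z)) = fun z => - H2 z := funext hid
  have h2 : (∫ z, H1 z ∂((volume : Measure (Fin N → ℝ)).prod volume))
      = - ∫ z, H2 z ∂((volume : Measure (Fin N → ℝ)).prod volume) := by
    calc (∫ z, H1 z ∂((volume : Measure (Fin N → ℝ)).prod volume))
        = ∫ z, H1 (shear N v z) ∂((volume : Measure (Fin N → ℝ)).prod volume) := hcomp.symm
      _ = ∫ z, - H2 z ∂((volume : Measure (Fin N → ℝ)).prod volume) := by rw [h1]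
      _ = - ∫ z, H2 z ∂((volume : Measure (Fin N → ℝ)).prod volume) := integral_neg _
  linarith

open MvPolynomial in
set_option maxHeartbeats 1000000 in
lemma indicator_decomp (hN : 1 ≤ N) (s lam : ℝ) (p : MvPolynomial (Fin N) ℝ) :
    ∀ y : Fin N → ℝ, Set.indicator (posOrth N)
        (fun y => gammaWeight s lam y * gen s lam lam (fun z => eval z p) y) y
      = ((∫ a, Hout s lam p 0 (-(unit N 0)) (y, a)) + (∫ a, Hin s lam p 0 (y, a)))
        + (∑ i ∈ Finset.range (N-1),
            ((∫ a, Hout s lam p i (unit N (i+1) - unit N i) (y, a))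
              + (∫ a, Hout s lam p (i+1) (unit N i - unit N (i+1)) (y, a))))
        + ((∫ a, Hout s lam p (N-1) (-(unit N (N-1))) (y, a))
            + (∫ a, Hin s lam p (N-1) (y, a))) := by
  intro y
  have h0N : 0 < N := hN
  have hN1 : N - 1 < N := Nat.sub_lt h0N one_pos
  by_cases hy : y ∈ posOrth N
  · rw [Set.indicator_of_mem hy]
    have hout : ∀ (i : ℕ) (v : Fin N → ℝ),
        gammaWeight s lam y * ∫ a in Set.Ioo 0 (get y i),
            ((1 - a / get y i) ^ (2*s-1) / a * (eval (y + a • v) p - eval y p))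
          = ∫ a, Hout s lam p i v (y, a) := by
      intro i v
      rw [← integral_indicator measurableSet_Ioo, ← integral_const_mul]
      congr 1
      funext a
      simp only [Hout, Set.indicator_of_mem hy]
    have hin : ∀ i : ℕ,
        gammaWeight s lam y * ∫ a in Set.Ioi (0:ℝ),
            (Real.exp (-(lam * a)) / a * (eval (y + a • unit N i) p - eval y p))
          = ∫ a, Hin s lam p i (y, a) := by
      intro i
      rw [← integral_indicator measurableSet_Ioi, ← integral_const_mul]
      congr 1
      funext a
      simp only [Hin, Set.indicator_of_mem hy]
    have hbulk : ∀ i ∈ Finset.range (N-1),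
        gammaWeight s lam y * bulkGen s i (fun z => eval z p) y
          = (∫ a, Hout s lam p i (unit N (i+1) - unit N i) (y, a))
            + (∫ a, Hout s lam p (i+1) (unit N i - unit N (i+1)) (y, a)) := by
      intro i hi
      have hi1 : i + 1 < N := by
        have := Finset.mem_range.1 hi
        omega
      have hiN : i < N := by omega
      rw [bulkGen, mul_add]
      have m1 : ∀ a : ℝ, move y i (i+1) a = y + a • (unit N (i+1) - unit N i) :=
        fun a => move_eq hiN hi1 (by omega) y a
      have m2 : ∀ a : ℝ, move y (i+1) i a = y + a • (unit N i - unit N (i+1)) :=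
        fun a => move_eq hi1 hiN (by omega) y a
      simp only [m1, m2]
      rw [hout i (unit N (i+1) - unit N i), hout (i+1) (unit N i - unit N (i+1))]
    have hleft : gammaWeight s lam y * leftGen s lam (fun z => eval z p) y
        = (∫ a, Hout s lam p 0 (-(unit N 0)) (y, a)) + (∫ a, Hin s lam p 0 (y, a)) := by
      rw [leftGen, mul_add]
      simp only [upd_sub_eq h0N y, upd_add_eq h0N y]
      rw [hout 0 (-(unit N 0)), hin 0]
    have hright : gammaWeight s lam y * rightGen s lam (fun z => eval z p) y
        = (∫ a, Hout s lam p (N-1) (-(unit N (N-1))) (y, a))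
            + (∫ a, Hin s lam p (N-1) (y, a)) := by
      rw [rightGen, mul_add]
      simp only [upd_sub_eq hN1 y, upd_add_eq hN1 y]
      rw [hout (N-1) (-(unit N (N-1))), hin (N-1)]
    rw [gen, mul_add, mul_add, hleft, hright, Finset.mul_sum,
      Finset.sum_congr rfl hbulk]
  · rw [Set.indicator_of_notMem hy]
    have hHout : ∀ (i : ℕ) (v : Fin N → ℝ) (a : ℝ), Hout s lam p i v (y, a) = 0 := by
      intro i v a
      simp [Hout, Set.indicator_of_notMem hy]
    have hHin : ∀ (i : ℕ) (a : ℝ), Hin s lam p i (y, a) = 0 := by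
      intro i a
      simp [Hin, Set.indicator_of_notMem hy]
    simp [hHout, hHin]

end Aux

/-- At equilibrium (`lamL = lamR = lam`), the product Gamma measure is stationary at the
generator level: the integral of `𝓛 f` against the measure vanishes for every polynomial `f`. -/
theorem stationarity_at_equilibrium (N : ℕ) (hN : 1 ≤ N) (s lam : ℝ)
    (hs : 0 < s) (hlam : 0 < lam) (p : MvPolynomial (Fin N) ℝ) :
    (∫ y in Set.pi Set.univ (fun _ : Fin N => Set.Ioi (0 : ℝ)),
        gammaWeight s lam y * gen s lam lam (fun z => MvPolynomial.eval z p) y) = 0 := by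
  have h0N : 0 < N := hN
  have hN1 : N - 1 < N := Nat.sub_lt h0N one_pos
  have hO : ∀ {i : ℕ}, i < N → ∀ v : Fin N → ℝ, Integrable (Hout s lam p i v)
      ((volume : Measure (Fin N → ℝ)).prod volume) :=
    fun {i} hi v => integrable_Hout hs hlam p hi v
  have hI : ∀ i : ℕ, Integrable (Hin s lam p i)
      ((volume : Measure (Fin N → ℝ)).prod volume) := fun i => integrable_Hin hs hlam p i
  have key := indicator_decomp hN s lam p
  have hsplit : (∫ y in Set.pi Set.univ (fun _ : Fin N => Set.Ioi (0 : ℝ)),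
        gammaWeight s lam y * gen s lam lam (fun z => MvPolynomial.eval z p) y)
      = ∫ y, Set.indicator (posOrth N)
          (fun y => gammaWeight s lam y * gen s lam lam (fun z => MvPolynomial.eval z p) y) y :=
    (integral_indicator measurableSet_posOrth).symm
  rw [hsplit, integral_congr_ae (Filter.Eventually.of_forall key)]
  have hT1 : Integrable (fun y : Fin N → ℝ => ∫ a, Hout s lam p 0 (-(unit N 0)) (y, a)) :=
    (hO h0N _).integral_prod_left
  have hT2 : Integrable (fun y : Fin N → ℝ => ∫ a, Hin s lam p 0 (y, a)) :=
    (hI 0).integral_prod_left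
  have hT3 : ∀ i ∈ Finset.range (N-1), Integrable (fun y : Fin N → ℝ =>
      (∫ a, Hout s lam p i (unit N (i+1) - unit N i) (y, a))
        + (∫ a, Hout s lam p (i+1) (unit N i - unit N (i+1)) (y, a))) := by
    intro i hi
    have hi1 : i + 1 < N := by
      have := Finset.mem_range.1 hi
      omega
    exact ((hO (by omega) _).integral_prod_left).add ((hO hi1 _).integral_prod_left)
  have hTsum : Integrable (fun y : Fin N → ℝ => ∑ i ∈ Finset.range (N-1),
      ((∫ a, Hout s lam p i (unit N (i+1) - unit N i) (y, a))
        + (∫ a, Hout s lam p (i+1) (unit N i - unit N (i+1)) (y, a)))) :=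
    integrable_finset_sum _ hT3
  have hT5 : Integrable (fun y : Fin N → ℝ => ∫ a, Hout s lam p (N-1) (-(unit N (N-1))) (y, a)) :=
    (hO hN1 _).integral_prod_left
  have hT6 : Integrable (fun y : Fin N → ℝ => ∫ a, Hin s lam p (N-1) (y, a)) :=
    (hI (N-1)).integral_prod_left
  have hG1 : Integrable (fun y : Fin N → ℝ =>
      (∫ a, Hout s lam p 0 (-(unit N 0)) (y, a)) + (∫ a, Hin s lam p 0 (y, a))) := hT1.add hT2
  have hG5 : Integrable (fun y : Fin N → ℝ =>
      (∫ a, Hout s lam p (N-1) (-(unit N (N-1))) (y, a))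
        + (∫ a, Hin s lam p (N-1) (y, a))) := hT5.add hT6
  have hG2 : Integrable (fun y : Fin N → ℝ =>
      ((∫ a, Hout s lam p 0 (-(unit N 0)) (y, a)) + (∫ a, Hin s lam p 0 (y, a)))
        + ∑ i ∈ Finset.range (N-1),
            ((∫ a, Hout s lam p i (unit N (i+1) - unit N i) (y, a))
              + (∫ a, Hout s lam p (i+1) (unit N i - unit N (i+1)) (y, a)))) := hG1.add hTsum
  rw [integral_add hG2 hG5, integral_add hG1 hTsum, integral_add hT1 hT2,
    integral_add hT5 hT6, integral_finset_sum _ hT3]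
  have hzero_left : (∫ y, ∫ a, Hout s lam p 0 (-(unit N 0)) (y, a))
      + (∫ y, ∫ a, Hin s lam p 0 (y, a)) = 0 := by
    rw [← integral_prod _ (hO h0N (-(unit N 0))), ← integral_prod _ (hI 0)]
    exact pair_cancel (unit N 0) (Hout_shear_boundary s lam p h0N)
  have hzero_right : (∫ y, ∫ a, Hout s lam p (N-1) (-(unit N (N-1))) (y, a))
      + (∫ y, ∫ a, Hin s lam p (N-1) (y, a)) = 0 := by
    rw [← integral_prod _ (hO hN1 (-(unit N (N-1)))), ← integral_prod _ (hI (N-1))]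
    exact pair_cancel (unit N (N-1)) (Hout_shear_boundary s lam p hN1)
  have hzero_bulk : ∀ i ∈ Finset.range (N-1),
      (∫ y, ((∫ a, Hout s lam p i (unit N (i+1) - unit N i) (y, a))
        + (∫ a, Hout s lam p (i+1) (unit N i - unit N (i+1)) (y, a)))) = 0 := by
    intro i hi
    have hi1 : i + 1 < N := by
      have := Finset.mem_range.1 hi
      omega
    rw [integral_add ((hO (by omega) _).integral_prod_left) ((hO hi1 _).integral_prod_left),
      ← integral_prod _ (hO (by omega) (unit N (i+1) - unit N i)),
      ← integral_prod _ (hO hi1 (unit N i - unit N (i+1)))]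
    exact pair_cancel (unit N i - unit N (i+1)) (Hout_shear_bulk s lam p hi1)
  rw [Finset.sum_eq_zero hzero_bulk]
  linarith [hzero_left, hzero_right]

end HeatModel
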